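/- Let x_1, ..., x_m be distinct vectors in Euclidean space ℝ^d (d ≠ 2) with ‖x_i + x_j‖ = 1 for all i ≠ j. Then m ≤ d+1. -/

import Mathlib

open Finset

theorem euclidean_midpoint_bound
    (d : ℕ) (hd : 0 < d) (hd2 : d ≠ 2)
    (m : ℕ) (x : Fin m → EuclideanSpace ℝ (Fin d))
    (hinj : Function.Injective x)
    (hmid : ∀ i j, i ≠ j → ‖x i + x j‖ = 1) :
    m ≤ d + 1 := by
  by_contra hm
  push_neg at hm
  have hle : d + 2 ≤ m := hm
  set v : Fin (d + 2) → EuclideanSpace ℝ (Fin d) := fun i => x (Fin.castLE hle i) with hv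
  have hvinj : Function.Injective v := fun i j h => Fin.castLE_injective hle (hinj h)
  have hvmid : ∀ i j : Fin (d + 2), i ≠ j → ‖v i + v j‖ = 1 := by
    intro i j hij
    exact hmid _ _ (fun h => hij (Fin.castLE_injective hle h))
  set a : Fin (d + 2) → ℝ := fun i => ‖v i‖ ^ 2 with ha
  have h_inner : ∀ i j : Fin (d + 2), i ≠ j →
      (inner ℝ (v i) (v j) : ℝ) = (1 - a i - a j) / 2 := by
    intro i j hij
    have h1 : ‖v i + v j‖ ^ 2 = 1 := by rw [hvmid i j hij]; norm_num
    have h2 := norm_add_sq_real (v i) (v j)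
    simp only [ha] at *
    linarith
  -- the linear map c ↦ (∑ cᵢ • vᵢ, ∑ cᵢ)
  set Φ : (Fin (d + 2) → ℝ) →ₗ[ℝ] (EuclideanSpace ℝ (Fin d)) × ℝ :=
    { toFun := fun c => (∑ i, c i • v i, ∑ i, c i)
      map_add' := by
        intro c c'
        simp [add_smul, Finset.sum_add_distrib, Prod.mk_add_mk]
      map_smul' := by
        intro r c
        simp [smul_smul, Finset.smul_sum, Prod.smul_mk, smul_eq_mul, Finset.mul_sum] } with hΦ
  have hnotinj : ¬ Function.Injective Φ := by
    intro h
    have h1 := LinearMap.finrank_le_finrank_of_injective h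
    have h2 : Module.finrank ℝ (Fin (d + 2) → ℝ) = d + 2 := by
      simp [Module.finrank_fintype_fun_eq_card]
    have h3 : Module.finrank ℝ ((EuclideanSpace ℝ (Fin d)) × ℝ) = d + 1 := by
      rw [Module.finrank_prod]
      simp [finrank_euclideanSpace_fin]
    omega
  rw [← LinearMap.ker_eq_bot] at hnotinj
  obtain ⟨c, hcmem, hc0⟩ := Submodule.ne_bot_iff _ |>.mp hnotinj
  have hcker : Φ c = 0 := hcmem
  have hL : ∑ i, c i • v i = 0 := by
    have := congrArg Prod.fst hcker
    simpa [hΦ] using this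
  have hS : ∑ i, c i = 0 := by
    have := congrArg Prod.snd hcker
    simpa [hΦ] using this
  set Γ : ℝ := ∑ i, c i * a i with hΓ
  have hkey : ∀ k : Fin (d + 2), (2 * a k - 1 / 2) * c k = Γ / 2 := by
    intro k
    have h0 : (inner ℝ (v k) (∑ i, c i • v i) : ℝ) = 0 := by
      rw [hL, inner_zero_right]
    rw [inner_sum] at h0
    simp only [real_inner_smul_right] at h0
    have hterm : ∀ i : Fin (d + 2),
        c i * (inner ℝ (v k) (v i) : ℝ)
          = c i * ((1 - a k - a i) / 2) + (if i = k then (2 * a k - 1 / 2) * c k else 0) := by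
      intro i
      by_cases hik : i = k
      · subst hik
        have hai : (inner ℝ (v i) (v i) : ℝ) = a i := real_inner_self_eq_norm_sq (v i)
        rw [hai, if_pos rfl]
        ring
      · rw [h_inner k i (fun h => hik h.symm), if_neg hik]
        ring
    rw [Finset.sum_congr rfl (fun i _ => hterm i)] at h0
    rw [Finset.sum_add_distrib, Finset.sum_ite_eq' Finset.univ k] at h0
    simp only [Finset.mem_univ, if_pos] at h0
    have hsum : ∑ i, c i * ((1 - a k - a i) / 2)
        = (1 - a k) / 2 * (∑ i, c i) - (∑ i, c i * a i) / 2 := by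
      rw [Finset.mul_sum, Finset.sum_div, ← Finset.sum_sub_distrib]
      exact Finset.sum_congr rfl (fun i _ => by ring)
    rw [hsum, hS] at h0
    rw [← hΓ] at h0
    linarith
  -- sum the key identity over k
  have hΓ0 : Γ = 0 := by
    have hsum2 : ∑ k, (2 * a k - 1 / 2) * c k = ∑ k : Fin (d + 2), Γ / 2 :=
      Finset.sum_congr rfl (fun k _ => hkey k)
    have hlhs : ∑ k, (2 * a k - 1 / 2) * c k = 2 * Γ - (∑ k, c k) / 2 := by
      rw [hΓ, Finset.mul_sum, Finset.sum_div, ← Finset.sum_sub_distrib]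
      exact Finset.sum_congr rfl (fun i _ => by ring)
    rw [hlhs, hS] at hsum2
    have hcard : ∑ k : Fin (d + 2), Γ / 2 = (d + 2 : ℝ) * (Γ / 2) := by
      rw [Finset.sum_const]
      simp [Finset.card_univ]
    rw [hcard] at hsum2
    have hd2' : (d : ℝ) ≠ 2 := by
      exact_mod_cast hd2
    have : Γ * ((d : ℝ) - 2) = 0 := by linarith
    rcases mul_eq_zero.mp this with h | h
    · exact h
    · exact absurd (by linarith : (d : ℝ) = 2) hd2'
  have hzero : ∀ k, (2 * a k - 1 / 2) * c k = 0 := by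
    intro k; rw [hkey k, hΓ0]; norm_num
  obtain ⟨p, hp⟩ : ∃ p, c p ≠ 0 := by
    by_contra h
    push_neg at h
    exact hc0 (funext h)
  have hap : a p = 1 / 4 := by
    have := hzero p
    rcases mul_eq_zero.mp this with h | h
    · linarith
    · exact absurd h hp
  have honly : ∀ q, q ≠ p → c q = 0 := by
    intro q hq
    by_contra hcq
    have haq : a q = 1 / 4 := by
      have := hzero q
      rcases mul_eq_zero.mp this with h | h
      · linarith
      · exact absurd h hcq
    have hvv : ‖v p - v q‖ ^ 2 = 0 := by
      have h2 := norm_sub_sq_real (v p) (v q)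
      rw [h_inner p q (fun h => hq h.symm)] at h2
      have e1 : ‖v p‖ ^ 2 = a p := rfl
      have e2 : ‖v q‖ ^ 2 = a q := rfl
      rw [e1, e2, hap, haq] at h2
      rw [h2]; norm_num
    have : v p = v q := by
      have := pow_eq_zero_iff (n := 2) (by norm_num) |>.mp hvv
      have := norm_eq_zero.mp this
      exact sub_eq_zero.mp this
    exact hq (hvinj this.symm)
  have hvp0 : v p = 0 := by
    have : ∑ i, c i • v i = c p • v p := by
      apply Finset.sum_eq_single
      · intro b _ hb
        rw [honly b hb, zero_smul]
      · intro h
        exact absurd (Finset.mem_univ p) h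
    rw [hL] at this
    rcases smul_eq_zero.mp this.symm with h | h
    · exact absurd h hp
    · exact h
  have hfin : a p = 0 := by
    show ‖v p‖ ^ 2 = 0
    rw [hvp0]; simp
  rw [hap] at hfin
  norm_num at hfin
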